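/- Let γ > 1 and D²η, F_j, η as in the Euler system with p(ρ) = ρ^γ. Then for states U₁ = (ρ₁, ρ₁u₁), U₂ = (ρ₂, ρ₂u₂) with ρ₁, ρ₂ > 0, the identity Σⱼ D²η(U₁)(∂ⱼU₁, F_j(U₂) − F_j(U₁) − DF_j(U₁)(U₂ − U₁)) = [p(ρ₂) − p(ρ₁) − p'(ρ₁)(ρ₂ − ρ₁)] div u₁ + (ρ₂/2) Σᵢⱼ (u₂ⁱ − u₁ⁱ)(u₂ʲ − u₁ʲ)(∂ⱼu₁ⁱ + ∂ᵢu₁ʲ) holds pointwise, where ∂ⱼU₁ denotes the spatial derivative of U₁ and the pairing is the bilinear form of the Hessian. -/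

import Mathlib

/-- The Hessian bilinear form of `η(ρ,m) = |m|²/(2ρ) + ρ^γ/(γ−1)` at the state `(ρ, m)`. -/
noncomputable def etaHess (γ : ℝ) (ρ : ℝ) (m : Fin 3 → ℝ)
    (V W : ℝ × (Fin 3 → ℝ)) : ℝ :=
  ((∑ i, (m i) ^ 2) / ρ ^ 3 + γ * ρ ^ (γ - 2)) * V.1 * W.1 -
    (1 / ρ ^ 2) * ∑ i, m i * (V.1 * W.2 i + W.1 * V.2 i) +
    (1 / ρ) * ∑ i, V.2 i * W.2 i

/-- The `j`-th Euler flux `F_j(ρ,m) = (m_j, m m_j/ρ + ρ^γ e_j)`. -/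
noncomputable def eulerFlux (γ : ℝ) (j : Fin 3) (u : ℝ × (Fin 3 → ℝ)) : ℝ × (Fin 3 → ℝ) :=
  (u.2 j, fun i => u.2 i * u.2 j / u.1 + u.1 ^ γ * (if i = j then 1 else 0))

lemma flux_fderiv (γ : ℝ) (j : Fin 3) (ρ : ℝ) (m : Fin 3 → ℝ) (hρ : 0 < ρ) (V : ℝ × (Fin 3 → ℝ)) :
    fderiv ℝ (eulerFlux γ j) (ρ, m) V =
      (V.2 j, fun i => (V.2 i * m j + m i * V.2 j) / ρ - m i * m j / ρ ^ 2 * V.1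
        + γ * ρ ^ (γ - 1) * V.1 * (if i = j then 1 else 0)) := by
  have hρ' : ρ ≠ 0 := hρ.ne'
  have hfst : HasFDerivAt (fun u : ℝ × (Fin 3 → ℝ) => u.1)
      (ContinuousLinearMap.fst ℝ ℝ (Fin 3 → ℝ)) (ρ, m) := hasFDerivAt_fst
  have hsnd : ∀ i : Fin 3, HasFDerivAt (fun u : ℝ × (Fin 3 → ℝ) => u.2 i)
      ((ContinuousLinearMap.proj i).comp (ContinuousLinearMap.snd ℝ ℝ (Fin 3 → ℝ))) (ρ, m) :=
    fun i => ((ContinuousLinearMap.proj (R := ℝ) (φ := fun _ : Fin 3 => ℝ) i).hasFDerivAt).comp (ρ, m) hasFDerivAt_snd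
  have hinv : HasFDerivAt (fun u : ℝ × (Fin 3 → ℝ) => (u.1)⁻¹)
      ((-((ρ : ℝ) ^ 2)⁻¹) • ContinuousLinearMap.fst ℝ ℝ (Fin 3 → ℝ)) (ρ, m) :=
    (hasDerivAt_inv hρ').comp_hasFDerivAt (ρ, m) hfst
  have H : HasFDerivAt (fun u : ℝ × (Fin 3 → ℝ) =>
      (u.2 j, fun i => u.2 i * u.2 j * (u.1)⁻¹ + u.1 ^ γ * (if i = j then 1 else 0))) _ (ρ, m) :=
    (HasFDerivAt.prodMk (hsnd j) (hasFDerivAt_pi.mpr fun i =>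
    (HasFDerivAt.add (HasFDerivAt.mul (HasFDerivAt.mul (hsnd i) (hsnd j)) hinv)
      ((hfst.rpow_const (p := γ) (Or.inl hρ')).mul_const (if i = j then 1 else 0)))))
  have h2 : eulerFlux γ j = fun u : ℝ × (Fin 3 → ℝ) =>
      (u.2 j, fun i => u.2 i * u.2 j * (u.1)⁻¹ + u.1 ^ γ * (if i = j then 1 else 0)) := by
    funext u; simp [eulerFlux, div_eq_mul_inv]
  rw [h2, H.fderiv]
  refine Prod.ext rfl (funext fun i => ?_)
  simp only [ContinuousLinearMap.prod_apply, ContinuousLinearMap.pi_apply,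
    ContinuousLinearMap.add_apply, ContinuousLinearMap.coe_comp', Function.comp_apply,
    ContinuousLinearMap.coe_fst', ContinuousLinearMap.coe_snd', ContinuousLinearMap.proj_apply,
    ContinuousLinearMap.smul_apply, smul_eq_mul,
    ContinuousLinearMap.coe_smul', Pi.smul_apply]
  field_simp
  ring


/-- The key cancellation identity of the relative entropy method:
`Σⱼ D²η(U₁)(∂ⱼU₁, F_j(U₂) − F_j(U₁) − DF_j(U₁)(U₂ − U₁))
  = [p(ρ₂) − p(ρ₁) − p'(ρ₁)(ρ₂ − ρ₁)] div u₁
    + (ρ₂/2) Σᵢⱼ (u₂ⁱ − u₁ⁱ)(u₂ʲ − u₁ʲ)(∂ⱼu₁ⁱ + ∂ᵢu₁ʲ)`,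
stated pointwise with `Dρ j = ∂ⱼρ₁`, `Du j i = ∂ⱼu₁ⁱ`, `m₁ = ρ₁u₁`, so that
`∂ⱼU₁ = (∂ⱼρ₁, ρ₁∂ⱼu₁ + u₁∂ⱼρ₁)`. -/
theorem stmt19 (γ : ℝ) (hγ : 1 < γ) (ρ₁ ρ₂ : ℝ) (hρ₁ : 0 < ρ₁) (hρ₂ : 0 < ρ₂)
    (u₁ u₂ : Fin 3 → ℝ) (Dρ : Fin 3 → ℝ) (Du : Fin 3 → Fin 3 → ℝ) :
    (∑ j : Fin 3,
        etaHess γ ρ₁ (fun i => ρ₁ * u₁ i)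
          ((Dρ j, fun i => ρ₁ * Du j i + u₁ i * Dρ j))
          (eulerFlux γ j (ρ₂, fun i => ρ₂ * u₂ i) -
            eulerFlux γ j (ρ₁, fun i => ρ₁ * u₁ i) -
            fderiv ℝ (eulerFlux γ j) (ρ₁, fun i => ρ₁ * u₁ i)
              ((ρ₂, fun i => ρ₂ * u₂ i) - (ρ₁, fun i => ρ₁ * u₁ i)))) =
      (ρ₂ ^ γ - ρ₁ ^ γ - γ * ρ₁ ^ (γ - 1) * (ρ₂ - ρ₁)) * (∑ j, Du j j) +
        (ρ₂ / 2) * ∑ i : Fin 3, ∑ j : Fin 3,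
          (u₂ i - u₁ i) * (u₂ j - u₁ j) * (Du j i + Du i j) := by
  have hρ₁' : ρ₁ ≠ 0 := hρ₁.ne'
  have hρ₂' : ρ₂ ≠ 0 := hρ₂.ne'
  set P : ℝ := ρ₂ ^ γ - ρ₁ ^ γ - γ * ρ₁ ^ (γ - 1) * (ρ₂ - ρ₁) with hP
  have hW : ∀ j : Fin 3,
      (eulerFlux γ j (ρ₂, fun i => ρ₂ * u₂ i) -
        eulerFlux γ j (ρ₁, fun i => ρ₁ * u₁ i) -
        fderiv ℝ (eulerFlux γ j) (ρ₁, fun i => ρ₁ * u₁ i)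
          ((ρ₂, fun i => ρ₂ * u₂ i) - (ρ₁, fun i => ρ₁ * u₁ i))) =
      ((0 : ℝ), fun i => ρ₂ * (u₂ i - u₁ i) * (u₂ j - u₁ j)
        + P * (if i = j then 1 else 0)) := by
    intro j
    rw [show ((ρ₂, fun i => ρ₂ * u₂ i) - (ρ₁, fun i => ρ₁ * u₁ i) :
        ℝ × (Fin 3 → ℝ)) = (ρ₂ - ρ₁, fun i => ρ₂ * u₂ i - ρ₁ * u₁ i) from rfl,
      flux_fderiv γ j ρ₁ (fun i => ρ₁ * u₁ i) hρ₁]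
    refine Prod.ext (by simp [eulerFlux]) (funext fun i => ?_)
    show (ρ₂ * u₂ i * (ρ₂ * u₂ j) / ρ₂ + ρ₂ ^ γ * (if i = j then 1 else 0))
        - (ρ₁ * u₁ i * (ρ₁ * u₁ j) / ρ₁ + ρ₁ ^ γ * (if i = j then 1 else 0))
        - (((ρ₂ * u₂ i - ρ₁ * u₁ i) * (ρ₁ * u₁ j) + (ρ₁ * u₁ i) * (ρ₂ * u₂ j - ρ₁ * u₁ j)) / ρ₁
          - (ρ₁ * u₁ i) * (ρ₁ * u₁ j) / ρ₁ ^ 2 * (ρ₂ - ρ₁)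
          + γ * ρ₁ ^ (γ - 1) * (ρ₂ - ρ₁) * (if i = j then 1 else 0)) = _
    rw [hP, Real.rpow_sub hρ₁, Real.rpow_one]
    rcases eq_or_ne i j with h | h
    · simp only [h, if_pos rfl]; field_simp; ring
    · simp only [if_neg h]; field_simp; ring
  simp only [hW]
  simp [etaHess, Fin.sum_univ_three]
  field_simp
  ring
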